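/- Every tabletop rearrangement instance admits a plan with exactly |{i : sᵢ ≠ gᵢ}| + ν(D) pick-and-place actions in which the set of positions used that are not among {s₁, …, sₙ, g₁, …, gₙ} has cardinality at most the maximum of ν(D[C]) over all strongly connected components C of the dependency digraph D, where ν denotes minimum feedback vertex set cardinality. -/

import Mathlib

open Metric in
/-- A configuration of `n` unit-disc objects in the plane (modeled by `ℂ`) is feasible
if the closed unit discs centered at the object positions are pairwise disjoint. -/
def FeasibleConfig {n : ℕ} (c : Fin n → ℂ) : Prop :=
  ∀ i j : Fin n, i ≠ j → Disjoint (closedBall (c i) 1) (closedBall (c j) 1)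

/-- A pick-and-place action changes the position of exactly one object. -/
def PickPlace {n : ℕ} (c c' : Fin n → ℂ) : Prop :=
  ∃ i : Fin n, c' i ≠ c i ∧ ∀ j : Fin n, j ≠ i → c' j = c j

/-- `plan`, the list of configurations resulting from the successive pick-and-place
actions, is a plan transforming the start configuration `s` into the goal
configuration `g`: each action changes the position of exactly one object, each
resulting configuration is feasible, and the final configuration is the goal.  The
number of actions of the plan is `plan.length`. -/
def IsPlan {n : ℕ} (s g : Fin n → ℂ) (plan : List (Fin n → ℂ)) : Prop :=
  List.Chain PickPlace s plan ∧ (∀ c ∈ plan, FeasibleConfig c) ∧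
    (s :: plan).getLast (by simp) = g

open Metric in
/-- The dependency digraph of the instance: an arc from `i` to `j` (for `i ≠ j`) exactly
when the closed unit disc centered at `g i` intersects the closed unit disc centered at
`s j`. -/
def DepArc {n : ℕ} (s g : Fin n → ℂ) (i j : Fin n) : Prop :=
  i ≠ j ∧ (Metric.closedBall (g i) 1 ∩ Metric.closedBall (s j) 1).Nonempty

/-- `S` is a feedback vertex set of the digraph with arc relation `A`: the subdigraph
induced on the complement of `S` contains no directed cycle (no nontrivial closed
directed walk). -/
def IsFVS {V : Type*} (A : V → V → Prop) (S : Set V) : Prop :=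
  ∀ x : V, ¬ Relation.TransGen (fun u v => A u v ∧ u ∉ S ∧ v ∉ S) x x

/-- `ν(D)`: the minimum cardinality of a feedback vertex set of the digraph with vertex
type `V` and arc relation `A`. -/
noncomputable def nuFVS {V : Type*} (A : V → V → Prop) : ℕ :=
  sInf {k | ∃ S : Set V, IsFVS A S ∧ S.ncard = k}

/-- The setoid of mutual reachability by directed paths; its classes are the strongly
connected components of the digraph. -/
def sccSetoid {V : Type*} (A : V → V → Prop) : Setoid V where
  r u v := Relation.ReflTransGen A u v ∧ Relation.ReflTransGen A v u
  iseqv :=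
    ⟨fun _ => ⟨.refl, .refl⟩, fun h => ⟨h.2, h.1⟩,
      fun h1 h2 => ⟨h1.1.trans h2.1, h2.2.trans h1.2⟩⟩

/-! ### Auxiliary material for the proof -/

namespace Stmt17

open Relation Set

/-! #### Plan composition -/

theorem isPlan_nil {n : ℕ} (a : Fin n → ℂ) : IsPlan a a [] :=
  ⟨List.Chain.nil, by simp, by simp⟩

theorem isPlan_single {n : ℕ} {a b : Fin n → ℂ} (h : PickPlace a b) (hf : FeasibleConfig b) :
    IsPlan a b [b] :=
  ⟨List.Chain.cons h List.Chain.nil, by simpa using hf, by simp⟩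

theorem chain_append' {α : Type*} {R : α → α → Prop} :
    ∀ (l₁ : List α) (a : α), List.Chain R a l₁ →
      ∀ l₂, List.Chain R ((a :: l₁).getLast (by simp)) l₂ → List.Chain R a (l₁ ++ l₂)
  | [], a, _, l₂, h₂ => by simpa using h₂
  | b :: t, a, h₁, l₂, h₂ => by
    obtain ⟨hab, ht⟩ := List.chain_cons.1 h₁
    exact List.Chain.cons hab (chain_append' t b ht l₂ (by simpa using h₂))

theorem isPlan_trans {n : ℕ} {a b c : Fin n → ℂ} {p₁ p₂ : List (Fin n → ℂ)}
    (h₁ : IsPlan a b p₁) (h₂ : IsPlan b c p₂) : IsPlan a c (p₁ ++ p₂) := by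
  obtain ⟨hc₁, hf₁, hl₁⟩ := h₁
  obtain ⟨hc₂, hf₂, hl₂⟩ := h₂
  refine ⟨chain_append' p₁ a hc₁ p₂ (by rw [hl₁]; exact hc₂), ?_, ?_⟩
  · intro x hx; rcases List.mem_append.1 hx with h | h
    exacts [hf₁ x h, hf₂ x h]
  · rcases p₂ with _ | ⟨d, t⟩
    · simp only [List.append_nil]
      rw [hl₁]; simpa using hl₂
    · rw [show (a :: (p₁ ++ d :: t)).getLast (by simp)
          = (d :: t).getLast (by simp) by simp [List.getLast_append_of_ne_nil]]
      simpa using hl₂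

/-! #### Digraph lemmas -/

variable {V : Type*}

/-- relative FVS number of the subgraph induced on `W`. -/
noncomputable def nuRel (A : V → V → Prop) (W : Set V) : ℕ :=
  sInf {k | ∃ S : Set V, S ⊆ W ∧
    (∀ x, ¬ TransGen (fun u v => A u v ∧ u ∈ W ∧ v ∈ W ∧ u ∉ S ∧ v ∉ S) x x) ∧ S.ncard = k}

theorem transGen_first {R : V → V → Prop} {x y : V} (h : TransGen R x y) : ∃ z, R x z := by
  induction h with
  | single h1 => exact ⟨_, h1⟩
  | tail _ _ ih => exact ih

theorem transGen_subtype {W : Set V} {R : V → V → Prop}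
    (hW : ∀ u v, R u v → u ∈ W ∧ v ∈ W) {x y : V} (h : TransGen R x y) :
    ∀ (hx : x ∈ W) (hy : y ∈ W),
      TransGen (fun u v : {z // z ∈ W} => R u.1 v.1) ⟨x, hx⟩ ⟨y, hy⟩ := by
  induction h with
  | single h1 => intro hx hy; exact .single h1
  | tail h1 h2 ih => intro hx hy; exact (ih hx (hW _ _ h2).1).tail h2

theorem bridge (A : V → V → Prop) (p : V → Prop) :
    nuFVS (fun u v : {x // p x} => A u.1 v.1) = nuRel A {x | p x} := by
  have hset : {k | ∃ S : Set {x // p x},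
        IsFVS (fun u v : {x // p x} => A u.1 v.1) S ∧ S.ncard = k}
      = {k | ∃ S : Set V, S ⊆ {x | p x} ∧
        (∀ x, ¬ TransGen (fun u v => A u v ∧ u ∈ {x | p x} ∧ v ∈ {x | p x} ∧
          u ∉ S ∧ v ∉ S) x x) ∧ S.ncard = k} := by
    ext k
    constructor
    · rintro ⟨S', hS', rfl⟩
      refine ⟨Subtype.val '' S', ?_, ?_, (Set.ncard_image_of_injective _ Subtype.val_injective)⟩
      · rintro x ⟨a, _, rfl⟩; exact a.2
      · intro x hx
        obtain ⟨z, hz⟩ := transGen_first hx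
        have hxW : x ∈ {x | p x} := hz.2.1
        have hcyc := transGen_subtype (W := {x | p x})
          (fun u v h => ⟨h.2.1, h.2.2.1⟩) hx hxW hxW
        refine hS' ⟨x, hxW⟩ (TransGen.mono ?_ _ _ hcyc)
        rintro a b ⟨h1, _, _, h4, h5⟩
        exact ⟨h1, fun hm => h4 ⟨a, hm, rfl⟩, fun hm => h5 ⟨b, hm, rfl⟩⟩
    · rintro ⟨S, hSW, hS, rfl⟩
      refine ⟨Subtype.val ⁻¹' S, ?_, ?_⟩
      · intro a ha
        refine hS a.1 (TransGen.lift Subtype.val ?_ _ _ ha)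
        rintro u v ⟨h1, h2, h3⟩
        exact ⟨h1, u.2, v.2, h2, h3⟩
      · have : Subtype.val '' ((Subtype.val ⁻¹' S : Set {x // p x})) = S := by
          rw [Set.image_preimage_eq_inter_range, Subtype.range_coe_subtype]
          exact Set.inter_eq_self_of_subset_left hSW
        rw [← Set.ncard_image_of_injective _ Subtype.val_injective, this]
  unfold nuFVS nuRel
  rw [hset]

theorem nuRel_attained [Finite V] (A : V → V → Prop) (W : Set V) :
    ∃ S : Set V, S ⊆ W ∧
      (∀ x, ¬ TransGen (fun u v => A u v ∧ u ∈ W ∧ v ∈ W ∧ u ∉ S ∧ v ∉ S) x x) ∧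
      S.ncard = nuRel A W := by
  have hne : {k | ∃ S : Set V, S ⊆ W ∧
      (∀ x, ¬ TransGen (fun u v => A u v ∧ u ∈ W ∧ v ∈ W ∧ u ∉ S ∧ v ∉ S) x x) ∧
      S.ncard = k}.Nonempty := by
    refine ⟨W.ncard, W, le_refl _, fun x hx => ?_, rfl⟩
    obtain ⟨z, hz⟩ := transGen_first hx
    exact hz.2.2.2.1 hz.2.1
  exact Nat.sInf_mem hne

theorem nuFVS_attained [Finite V] (A : V → V → Prop) :
    ∃ S : Set V, IsFVS A S ∧ S.ncard = nuFVS A := by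
  have hne : {k | ∃ S : Set V, IsFVS A S ∧ S.ncard = k}.Nonempty := by
    refine ⟨(Set.univ : Set V).ncard, Set.univ, fun x hx => ?_, rfl⟩
    obtain ⟨z, hz⟩ := transGen_first hx
    exact hz.2.1 (Set.mem_univ x)
  exact Nat.sInf_mem hne

theorem transGen_avoid {R : V → V → Prop} {x : V} (hx : ∀ v, ¬ R x v) {y : V}
    (h : TransGen R y y) : TransGen (fun u v => R u v ∧ u ≠ x ∧ v ≠ x) y y := by
  have hy : y ≠ x := by
    obtain ⟨z, hz⟩ := transGen_first h
    rintro rfl; exact hx z hz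
  have aux : ∀ a b, TransGen R a b → b ≠ x →
      TransGen (fun u v => R u v ∧ u ≠ x ∧ v ≠ x) a b := by
    intro a b hab
    induction hab with
    | single h1 => exact fun hb => .single ⟨h1, fun e => hx _ (e ▸ h1), hb⟩
    | tail h1 h2 ih =>
      intro hb
      exact (ih (fun e => hx _ (e ▸ h2))).tail ⟨h2, fun e => hx _ (e ▸ h2), hb⟩
  exact aux y y h hy

/-- every vertex of a closed directed walk lies in the strongly connected class of the
basepoint. -/
theorem cycle_in_class {A R : V → V → Prop} (hRA : ∀ u v, R u v → A u v) :
    ∀ {x y : V}, TransGen R x y → ReflTransGen A y x →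
    TransGen (fun u v => R u v ∧
      (ReflTransGen A x u ∧ ReflTransGen A u x) ∧
      (ReflTransGen A x v ∧ ReflTransGen A v x)) x y := by
  intro x y h
  induction h with
  | single h1 =>
    intro hyx
    exact .single ⟨h1, ⟨.refl, .refl⟩, ⟨ReflTransGen.single (hRA _ _ h1), hyx⟩⟩
  | @tail b c h1 h2 ih =>
    intro hcx
    have hbc : ReflTransGen A b c := ReflTransGen.single (hRA _ _ h2)
    have hbx : ReflTransGen A b x := hbc.trans hcx
    have hxb : ReflTransGen A x b := (TransGen.mono hRA _ _ h1).to_reflTransGen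
    exact (ih hbx).tail ⟨h2, ⟨hxb, hbx⟩, ⟨hxb.trans hbc, hcx⟩⟩

theorem ncard_iUnion_le' {ι : Type*} [Fintype ι] [Fintype V] (S : ι → Set V) :
    (⋃ c, S c).ncard ≤ ∑ c, (S c).ncard := by
  classical
  have h : (⋃ c, S c) = ↑(Finset.univ.biUnion fun c => (S c).toFinset) := by
    ext x; simp [Set.mem_toFinset]
  rw [h, Set.ncard_coe_finset]
  refine Finset.card_biUnion_le.trans (Finset.sum_le_sum fun c _ => ?_)
  rw [Set.ncard_eq_toFinset_card']

theorem nuFVS_eq_sum [Fintype V] (A : V → V → Prop)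
    [Fintype (Quotient (sccSetoid A))] :
    nuFVS A = ∑ c : Quotient (sccSetoid A),
      nuRel A {x | Quotient.mk (sccSetoid A) x = c} := by
  classical
  apply le_antisymm
  · choose S hSW hSfvs hScard using fun c : Quotient (sccSetoid A) =>
      nuRel_attained A {x | Quotient.mk (sccSetoid A) x = c}
    have hfvs : IsFVS A (⋃ c, S c) := by
      intro x hx
      have h2 := cycle_in_class (A := A)
        (R := fun u v => A u v ∧ u ∉ ⋃ c, S c ∧ v ∉ ⋃ c, S c)
        (fun u v h => h.1) hx ((TransGen.mono (fun u v h => h.1) _ _ hx).to_reflTransGen)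
      refine hSfvs (Quotient.mk (sccSetoid A) x) x (TransGen.mono ?_ _ _ h2)
      rintro u v ⟨⟨h1, h4, h5⟩, hu, hv⟩
      have huW : Quotient.mk (sccSetoid A) u = Quotient.mk (sccSetoid A) x :=
        Quotient.sound ⟨hu.2, hu.1⟩
      have hvW : Quotient.mk (sccSetoid A) v = Quotient.mk (sccSetoid A) x :=
        Quotient.sound ⟨hv.2, hv.1⟩
      exact ⟨h1, huW, hvW, fun hm => h4 (Set.mem_iUnion.2 ⟨_, hm⟩),
        fun hm => h5 (Set.mem_iUnion.2 ⟨_, hm⟩)⟩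
    calc nuFVS A ≤ (⋃ c, S c).ncard := Nat.sInf_le ⟨_, hfvs, rfl⟩
      _ ≤ ∑ c, (S c).ncard := ncard_iUnion_le' _
      _ = _ := by simp [hScard]
  · obtain ⟨S, hSfvs, hScard⟩ := nuFVS_attained A
    have hle : ∀ c : Quotient (sccSetoid A),
        nuRel A {x | Quotient.mk (sccSetoid A) x = c} ≤
          (S ∩ {x | Quotient.mk (sccSetoid A) x = c}).ncard := by
      intro c
      apply Nat.sInf_le
      refine ⟨S ∩ _, Set.inter_subset_right, fun x hx => hSfvs x (TransGen.mono ?_ _ _ hx), rfl⟩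
      rintro u v ⟨h1, h2, h3, h4, h5⟩
      exact ⟨h1, fun hm => h4 ⟨hm, h2⟩, fun hm => h5 ⟨hm, h3⟩⟩
    calc ∑ c, nuRel A {x | Quotient.mk (sccSetoid A) x = c}
        ≤ ∑ c, (S ∩ {x | Quotient.mk (sccSetoid A) x = c}).ncard :=
          Finset.sum_le_sum fun c _ => hle c
      _ = S.ncard := by
          rw [Set.ncard_eq_toFinset_card' S,
            Finset.card_eq_sum_card_fiberwise
              (f := fun x => Quotient.mk (sccSetoid A) x) (t := Finset.univ)
              (fun x _ => Finset.mem_univ _)]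
          refine Finset.sum_congr rfl fun c _ => ?_
          rw [Set.ncard_eq_toFinset_card']
          congr 1
          ext x
          simp [Set.mem_toFinset]
      _ = nuFVS A := hScard

end Stmt17

open Metric in
/-- Every tabletop rearrangement instance admits a plan with exactly
`|{i : sᵢ ≠ gᵢ}| + ν(D)` pick-and-place actions in which the set of positions used that
are not among the start or goal positions has cardinality at most the maximum of
`ν(D[C])` over all strongly connected components `C` of the dependency digraph `D`. -/
theorem stmt_17 {n : ℕ} (s g : Fin n → ℂ)
    (hs : ∀ i j : Fin n, i ≠ j → Disjoint (closedBall (s i) 1) (closedBall (s j) 1))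
    (hg : ∀ i j : Fin n, i ≠ j → Disjoint (closedBall (g i) 1) (closedBall (g j) 1)) :
    ∃ plan : List (Fin n → ℂ), IsPlan s g plan ∧
      plan.length = {i : Fin n | s i ≠ g i}.ncard + nuFVS (DepArc s g) ∧
      ({x : ℂ | ∃ c ∈ plan, ∃ i : Fin n, c i = x} \ (Set.range s ∪ Set.range g)).ncard ≤
        ⨆ c : Quotient (sccSetoid (DepArc s g)),
          nuFVS (fun u v : {x : Fin n // Quotient.mk (sccSetoid (DepArc s g)) x = c} =>
            DepArc s g u.1 v.1) := by
  classical
  set A := DepArc s g with hA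
  haveI : Fintype (Quotient (sccSetoid A)) := Fintype.ofFinite _
  -- ### geometric preliminaries
  have hne_of : ∀ x y : ℂ, 2 < dist x y → x ≠ y := by
    intro x y h he; rw [he] at h; simp at h; linarith
  have hdisj : ∀ x y : ℂ, 2 < dist x y → Disjoint (closedBall x 1) (closedBall y 1) := by
    intro x y h; apply closedBall_disjoint_closedBall; linarith
  have hAdisj : ∀ i j : Fin n, i ≠ j → ¬ A i j →
      Disjoint (closedBall (g i) 1) (closedBall (s j) 1) := by
    intro i j hne hnA
    rw [Set.disjoint_iff_inter_eq_empty, ← Set.not_nonempty_iff_eq_empty]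
    exact fun hne2 => hnA ⟨hne, hne2⟩
  have hAself : ∀ i : Fin n, s i = g i → ∀ j, ¬ A i j := by
    intro i he j hAij
    obtain ⟨hne, z, hz1, hz2⟩ := hAij
    exact Set.disjoint_left.1 (hs i j hne) (by rw [he]; exact hz1) hz2
  -- buffers
  set R0 : ℝ := 3 + ∑ i, (‖s i‖ + ‖g i‖) with hR0
  have hR0s : ∀ i, ‖s i‖ ≤ R0 - 3 := by
    intro i
    have h1 : ‖s i‖ + ‖g i‖ ≤
        ∑ j, (‖s j‖ + ‖g j‖) :=
      Finset.single_le_sum (f := fun j => ‖s j‖ + ‖g j‖)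
        (fun j _ => by positivity) (Finset.mem_univ i)
    have h2 : 0 ≤ ‖g i‖ := by positivity
    rw [hR0]; linarith
  have hR0g : ∀ i, ‖g i‖ ≤ R0 - 3 := by
    intro i
    have h1 : ‖s i‖ + ‖g i‖ ≤
        ∑ j, (‖s j‖ + ‖g j‖) :=
      Finset.single_le_sum (f := fun j => ‖s j‖ + ‖g j‖)
        (fun j _ => by positivity) (Finset.mem_univ i)
    have h2 : 0 ≤ ‖s i‖ := by positivity
    rw [hR0]; linarith
  have hR0nonneg : 0 ≤ R0 - 3 := by
    have h1 : 0 ≤ ∑ i, (‖s i‖ + ‖g i‖) := by positivity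
    rw [hR0]; linarith
  set buf : ℕ → ℂ := fun k => ((R0 + 3 * k : ℝ) : ℂ) with hbufdef
  have hbufnorm : ∀ k, ‖buf k‖ = R0 + 3 * k := by
    intro k
    rw [hbufdef]
    simp only [Complex.norm_real, Real.norm_eq_abs]
    rw [abs_of_nonneg]
    nlinarith [hR0nonneg]
  have hbuffar : ∀ (k : ℕ) (z : ℂ), ‖z‖ ≤ R0 - 3 → 2 < dist (buf k) z := by
    intro k z hz
    have h1 : ‖buf k‖ - ‖z‖ ≤ dist (buf k) z := by
      rw [dist_eq_norm]
      exact norm_sub_norm_le _ _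
    have h2 := hbufnorm k
    have : (0:ℝ) ≤ 3 * k := by positivity
    linarith
  have hbufs : ∀ (k : ℕ) (i : Fin n), 2 < dist (buf k) (s i) := fun k i =>
    hbuffar k _ (hR0s i)
  have hbufg : ∀ (k : ℕ) (i : Fin n), 2 < dist (buf k) (g i) := fun k i =>
    hbuffar k _ (hR0g i)
  have hbufbuf : ∀ k l : ℕ, k ≠ l → 2 < dist (buf k) (buf l) := by
    intro k l hkl
    have hco : dist (buf k) (buf l) = |R0 + 3 * (k:ℝ) - (R0 + 3 * (l:ℝ))| := by
      rw [hbufdef]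
      simp only [Complex.dist_eq, ← Complex.ofReal_sub, Complex.norm_real, Real.norm_eq_abs]
    rw [hco]
    have h3 : ((k:ℝ)) ≠ (l:ℝ) := by exact_mod_cast hkl
    have h4 : (1:ℝ) ≤ |(k:ℝ) - (l:ℝ)| := by
      rcases lt_or_gt_of_ne h3 with h | h
      · rw [abs_of_nonpos (by linarith)]
        have : (k:ℝ) + 1 ≤ l := by exact_mod_cast Nat.succ_le_of_lt (by exact_mod_cast h)
        linarith
      · rw [abs_of_nonneg (by linarith)]
        have : (l:ℝ) + 1 ≤ k := by exact_mod_cast Nat.succ_le_of_lt (by exact_mod_cast h)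
        linarith
    have h5 : R0 + 3 * k - (R0 + 3 * l) = 3 * ((k:ℝ) - l) := by ring
    rw [h5, abs_mul, abs_of_nonneg (by norm_num : (0:ℝ) ≤ 3)]
    linarith
  -- ### the master feasibility lemma
  have master : ∀ (B X : Finset (Fin n)) (b : Fin n → ℂ),
      (∀ i ∈ B, ∀ j : Fin n, 2 < dist (b i) (s j)) →
      (∀ i ∈ B, ∀ j : Fin n, 2 < dist (b i) (g j)) →
      (∀ i ∈ B, ∀ j ∈ B, i ≠ j → 2 < dist (b i) (b j)) →
      (∀ i j : Fin n, i ∉ B → i ∉ X → j ∈ X → j ∉ B → i ≠ j → ¬ A i j) →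
      FeasibleConfig (fun i => if i ∈ B then b i else if i ∈ X then s i else g i) := by
    intro B X b hbs' hbg' hbb' harc i j hij
    have hval : ∀ k : Fin n,
        ((if k ∈ B then b k else if k ∈ X then s k else g k) = b k ∧ k ∈ B) ∨
        ((if k ∈ B then b k else if k ∈ X then s k else g k) = s k ∧ k ∉ B ∧ k ∈ X) ∨
        ((if k ∈ B then b k else if k ∈ X then s k else g k) = g k ∧ k ∉ B ∧ k ∉ X) := by
      intro k
      by_cases h1 : k ∈ B
      · exact Or.inl ⟨by simp [h1], h1⟩
      · by_cases h2 : k ∈ X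
        · exact Or.inr (Or.inl ⟨by simp [h1, h2], h1, h2⟩)
        · exact Or.inr (Or.inr ⟨by simp [h1, h2], h1, h2⟩)
    rcases hval i with ⟨hvi, hiB⟩ | ⟨hvi, hiB, hiX⟩ | ⟨hvi, hiB, hiX⟩ <;>
      rcases hval j with ⟨hvj, hjB⟩ | ⟨hvj, hjB, hjX⟩ | ⟨hvj, hjB, hjX⟩ <;>
      simp only [hvi, hvj]
    · exact hdisj _ _ (hbb' i hiB j hjB hij)
    · exact hdisj _ _ (hbs' i hiB j)
    · exact hdisj _ _ (hbg' i hiB j)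
    · exact (hdisj _ _ (hbs' j hjB i)).symm
    · exact hs i j hij
    · exact (hAdisj j i hij.symm (harc j i hjB hjX hiX hiB hij.symm)).symm
    · exact (hdisj _ _ (hbg' j hjB i)).symm
    · exact hAdisj i j hij (harc i j hiB hiX hjX hjB hij)
    · exact hg i j hij
  -- ### component counts
  have hνK : ∀ c : Quotient (sccSetoid A),
      Stmt17.nuRel A {x | Quotient.mk (sccSetoid A) x = c} ≤
        ⨆ c : Quotient (sccSetoid A),
          nuFVS (fun u v : {x : Fin n // Quotient.mk (sccSetoid A) x = c} =>
            A u.1 v.1) := by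
    intro c
    rw [← Stmt17.bridge A (fun x => Quotient.mk (sccSetoid A) x = c)]
    exact le_ciSup (f := fun c : Quotient (sccSetoid A) =>
      nuFVS (fun u v : {x : Fin n // Quotient.mk (sccSetoid A) x = c} => A u.1 v.1))
      (Set.Finite.bddAbove (Set.finite_range _)) c
  set K := ⨆ c : Quotient (sccSetoid A),
      nuFVS (fun u v : {x : Fin n // Quotient.mk (sccSetoid A) x = c} =>
        A u.1 v.1) with hK
  set Pos : Set ℂ := (Set.range s ∪ Set.range g) ∪ buf '' Set.Iio K with hPos
  -- ### the outer induction over remaining components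
  have outer : ∀ (N : ℕ) (T : Finset (Fin n)), T.card ≤ N →
      (∀ i j : Fin n, i ∉ T → j ∈ T → ¬ A i j) →
      ∃ plan : List (Fin n → ℂ),
        IsPlan (fun i => if i ∈ T then s i else g i) g plan ∧
        plan.length = (T.filter fun i => s i ≠ g i).card +
          ∑ c : Quotient (sccSetoid A),
            (if ∀ x : Fin n, Quotient.mk (sccSetoid A) x = c → x ∈ T then
              Stmt17.nuRel A {x | Quotient.mk (sccSetoid A) x = c} else 0) ∧
        ∀ cf ∈ plan, ∀ i : Fin n, cf i ∈ Pos := by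
    intro N
    induction N with
    | zero =>
      intro T hcard hInv
      have hTe : T = ∅ := Finset.card_eq_zero.1 (Nat.le_zero.1 hcard)
      subst hTe
      refine ⟨[], ?_, ?_, by simp⟩
      · have he : (fun i => if i ∈ (∅ : Finset (Fin n)) then s i else g i) = g := by
          funext i; simp
        rw [he]; exact Stmt17.isPlan_nil g
      · have hsum0 : (∑ c : Quotient (sccSetoid A),
            (if ∀ x : Fin n, Quotient.mk (sccSetoid A) x = c → x ∈ (∅ : Finset (Fin n)) then
              Stmt17.nuRel A {x | Quotient.mk (sccSetoid A) x = c} else 0)) = 0 := by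
          refine Finset.sum_eq_zero fun c _ => if_neg fun hcond => ?_
          obtain ⟨x, hx⟩ := Quotient.exists_rep c
          exact absurd (hcond x hx) (Finset.notMem_empty x)
        rw [hsum0]; simp
    | succ N ih =>
      intro T hcard hInv
      rcases T.eq_empty_or_nonempty with hTe | hTne
      · exact ih T (by simp [hTe]) hInv
      -- pick a sink strongly connected component among the remaining vertices
      have hwf : WellFounded (fun a b : Fin n =>
          (Relation.ReflTransGen A b a ∧ ¬ Relation.ReflTransGen A a b)) := by
        haveI : IsTrans (Fin n) (fun a b : Fin n =>
            (Relation.ReflTransGen A b a ∧ ¬ Relation.ReflTransGen A a b)) := ⟨by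
          rintro a b c ⟨hba, hnab⟩ ⟨hcb, hnbc⟩
          exact ⟨hcb.trans hba, fun hac => hnab (hac.trans hcb)⟩⟩
        haveI : IsIrrefl (Fin n) (fun a b : Fin n =>
            (Relation.ReflTransGen A b a ∧ ¬ Relation.ReflTransGen A a b)) := ⟨fun a h => h.2 h.1⟩
        exact Finite.wellFounded_of_trans_of_irrefl _
      obtain ⟨m, hmT, hmin⟩ := hwf.has_min ↑T (Finset.coe_nonempty.2 hTne)
      have hmin' : ∀ v ∈ T, ¬ (Relation.ReflTransGen A m v ∧ ¬ Relation.ReflTransGen A v m) := by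
        intro v hv
        exact hmin v (Finset.mem_coe.2 hv)
      have hclosed : ∀ y z : Fin n, Relation.ReflTransGen A y z → z ∈ T → y ∈ T := by
        intro y z h
        induction h using Relation.ReflTransGen.head_induction_on with
        | refl => exact fun h => h
        | head hab _ ihc =>
          intro hz
          by_contra hy
          exact hInv _ _ hy (ihc hz) hab
      set C : Finset (Fin n) := Finset.univ.filter
        (fun y => Quotient.mk (sccSetoid A) y = Quotient.mk (sccSetoid A) m) with hC
      have hmemC : ∀ y, y ∈ C ↔
          Quotient.mk (sccSetoid A) y = Quotient.mk (sccSetoid A) m := by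
        intro y; rw [hC]; simp
      have hmC : m ∈ C := (hmemC m).2 rfl
      have hreach : ∀ y ∈ C, Relation.ReflTransGen A y m ∧ Relation.ReflTransGen A m y := by
        intro y hy
        have h2 : (sccSetoid A).r y m := Quotient.exact ((hmemC y).1 hy)
        exact ⟨h2.1, h2.2⟩
      have hCT : ∀ y ∈ C, y ∈ T := fun y hy => hclosed y m (hreach y hy).1 hmT
      have hsink : ∀ u ∈ C, ∀ v, v ∈ T → v ∉ C → ¬ A u v := by
        intro u hu v hvT hvC hAuv
        have hmv : Relation.ReflTransGen A m v := (hreach u hu).2.tail hAuv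
        exact hmin' v hvT ⟨hmv, fun hvm => hvC ((hmemC v).2 (Quotient.sound ⟨hvm, hmv⟩))⟩
      -- a minimum feedback vertex set of the component
      obtain ⟨Sset, hSW, hSfvs, hScard⟩ := Stmt17.nuRel_attained A
        {x | Quotient.mk (sccSetoid A) x = Quotient.mk (sccSetoid A) m}
      have hSsetC : ∀ x ∈ Sset, x ∈ C := fun x hx => (hmemC x).2 (hSW hx)
      have hSM : ∀ x ∈ Sset, s x ≠ g x := by
        intro x hx he
        have hnoarc := hAself x he
        have hq : Stmt17.nuRel A
            {x | Quotient.mk (sccSetoid A) x = Quotient.mk (sccSetoid A) m}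
            ≤ (Sset \ {x}).ncard := by
          apply Nat.sInf_le
          refine ⟨Sset \ {x}, Set.diff_subset.trans hSW, ?_, rfl⟩
          intro y hy
          apply hSfvs y
          have h2 := Stmt17.transGen_avoid (x := x) (fun v hv => hnoarc v hv.1) hy
          refine Relation.TransGen.mono ?_ _ _ h2
          rintro u v ⟨⟨h1, h2', h3, h4, h5⟩, hux, hvx⟩
          exact ⟨h1, h2', h3, fun hm => h4 ⟨hm, by simp [hux]⟩,
            fun hm => h5 ⟨hm, by simp [hvx]⟩⟩
        have hlt : (Sset \ {x}).ncard < Sset.ncard :=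
          Set.ncard_diff_singleton_lt_of_mem hx (Set.toFinite _)
        rw [hScard] at hlt
        omega
      set S : Finset (Fin n) := Sset.toFinset with hSdef
      have hSmem : ∀ x, x ∈ S ↔ x ∈ Sset := by intro x; rw [hSdef]; exact Set.mem_toFinset
      have hScard' : S.card = Stmt17.nuRel A
          {x | Quotient.mk (sccSetoid A) x = Quotient.mk (sccSetoid A) m} := by
        rw [← hScard, hSdef, ← Set.ncard_eq_toFinset_card']
      have hSC : ∀ x ∈ S, x ∈ C := fun x hx => hSsetC x ((hSmem x).1 hx)
      have hST : ∀ x ∈ S, x ∈ T := fun x hx => hCT x (hSC x hx)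
      have hSMf : ∀ x ∈ S, s x ≠ g x := fun x hx => hSM x ((hSmem x).1 hx)
      -- buffer positions for the FVS
      set e := Fintype.equivFin {x // x ∈ S} with he
      set b : Fin n → ℂ := fun i => if h : i ∈ S then buf (e ⟨i, h⟩) else 0 with hb
      have hbval : ∀ (i : Fin n) (h : i ∈ S), b i = buf (e ⟨i, h⟩) := by
        intro i h; rw [hb]; simp only [dif_pos h]
      have hbPos : ∀ i ∈ S, b i ∈ Pos := by
        intro i hi
        rw [hbval i hi]
        refine Set.mem_union_right _ ⟨((e ⟨i, hi⟩ : Fin _) : ℕ), ?_, rfl⟩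
        have h1 : ((e ⟨i, hi⟩ : Fin _) : ℕ) < Fintype.card {x // x ∈ S} := (e ⟨i, hi⟩).2
        have h2 : Fintype.card {x // x ∈ S} = S.card := Fintype.card_coe S
        have h3 : S.card ≤ K := by rw [hScard']; exact hνK _
        simp only [Set.mem_Iio]
        omega
      have hbs2 : ∀ i ∈ S, ∀ j, 2 < dist (b i) (s j) := by
        intro i hi j; rw [hbval i hi]; exact hbufs _ j
      have hbg2 : ∀ i ∈ S, ∀ j, 2 < dist (b i) (g j) := by
        intro i hi j; rw [hbval i hi]; exact hbufg _ j
      have hbb2 : ∀ i ∈ S, ∀ j ∈ S, i ≠ j → 2 < dist (b i) (b j) := by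
        intro i hi j hj hij
        rw [hbval i hi, hbval j hj]
        apply hbufbuf
        intro hcontra
        exact hij (congrArg Subtype.val (e.injective (Fin.val_injective hcontra)))
      have hposPlain : ∀ (X : Finset (Fin n)) (i : Fin n),
          (if i ∈ X then s i else g i) ∈ Pos := by
        intro X i
        by_cases h : i ∈ X
        · simp only [if_pos h]; exact Set.mem_union_left _ (Set.mem_union_left _ ⟨i, rfl⟩)
        · simp only [if_neg h]; exact Set.mem_union_left _ (Set.mem_union_right _ ⟨i, rfl⟩)
      -- ### phase 1 : move the FVS to the buffers
      have p1 : ∀ (N1 : ℕ) (P : Finset (Fin n)), P ⊆ S → (S \ P).card ≤ N1 →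
          ∃ plan : List (Fin n → ℂ),
            IsPlan (fun i => if i ∈ P then b i else if i ∈ T then s i else g i)
              (fun i => if i ∈ S then b i else if i ∈ T then s i else g i) plan ∧
            plan.length = (S \ P).card ∧ ∀ cf ∈ plan, ∀ i, cf i ∈ Pos := by
        intro N1
        induction N1 with
        | zero =>
          intro P hPS hc
          have hPS' : P = S := Finset.Subset.antisymm hPS
            (Finset.sdiff_eq_empty_iff_subset.1 (Finset.card_eq_zero.1 (Nat.le_zero.1 hc)))
          subst hPS'
          exact ⟨[], Stmt17.isPlan_nil _, by simp, by simp⟩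
        | succ N1 ih1 =>
          intro P hPS hc
          rcases (S \ P).eq_empty_or_nonempty with he1 | ⟨x, hx⟩
          · exact ih1 P hPS (by simp [he1])
          have hxS : x ∈ S := (Finset.mem_sdiff.1 hx).1
          have hxP : x ∉ P := (Finset.mem_sdiff.1 hx).2
          have hxT : x ∈ T := hST x hxS
          have hins : ∀ i ∈ insert x P, i ∈ S := by
            intro i hi
            rcases Finset.mem_insert.1 hi with rfl | h
            exacts [hxS, hPS h]
          have hpp : PickPlace (fun i => if i ∈ P then b i else if i ∈ T then s i else g i)
              (fun i => if i ∈ insert x P then b i else if i ∈ T then s i else g i) := by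
            refine ⟨x, ?_, ?_⟩
            · simp only [Finset.mem_insert_self, if_pos, if_neg hxP, if_pos hxT]
              exact hne_of _ _ (hbs2 x hxS x)
            · intro j hj
              have hiff : (j ∈ insert x P) ↔ (j ∈ P) := by simp [Finset.mem_insert, hj]
              simp only [if_congr hiff rfl rfl]
          have hfeas : FeasibleConfig
              (fun i => if i ∈ insert x P then b i else if i ∈ T then s i else g i) := by
            apply master (insert x P) T b
            · intro i hi j
              exact hbs2 i (hins i hi) j
            · intro i hi j
              exact hbg2 i (hins i hi) j
            · intro i hi j hj hij
              exact hbb2 i (hins i hi) j (hins j hj) hij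
            · intro i j _ hiX hjX _ _
              exact hInv i j hiX hjX
          have hpos2 : ∀ i, (fun i => if i ∈ insert x P then b i
              else if i ∈ T then s i else g i) i ∈ Pos := by
            intro i
            by_cases h1 : i ∈ insert x P
            · simp only [if_pos h1]
              exact hbPos i (hins i h1)
            · simp only [if_neg h1]
              exact hposPlain T i
          have hsd : S \ insert x P = (S \ P).erase x := by
            ext y
            simp only [Finset.mem_sdiff, Finset.mem_erase, Finset.mem_insert]
            tauto
          have hcard1 : 0 < (S \ P).card := Finset.card_pos.2 ⟨x, hx⟩
          obtain ⟨plan', hq1, hq2, hq3⟩ := ih1 (insert x P)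
            (Finset.insert_subset hxS hPS)
            (by rw [hsd, Finset.card_erase_of_mem hx]; omega)
          refine ⟨_ :: plan', Stmt17.isPlan_trans (Stmt17.isPlan_single hpp hfeas) hq1,
            ?_, ?_⟩
          · simp only [List.length_cons, hq2, hsd, Finset.card_erase_of_mem hx]
            omega
          · intro cf hcf i
            rcases List.mem_cons.1 hcf with rfl | h
            · exact hpos2 i
            · exact hq3 cf h i
      -- ### phase 2 : place the non-FVS vertices of the component
      set R₀ : Finset (Fin n) := (C \ S).filter (fun i => s i ≠ g i) with hR₀
      have hR₀C : ∀ y ∈ R₀, y ∈ C := by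
        intro y hy
        rw [hR₀] at hy
        exact (Finset.mem_sdiff.1 (Finset.mem_filter.1 hy).1).1
      have hR₀S : ∀ y ∈ R₀, y ∉ S := by
        intro y hy
        rw [hR₀] at hy
        exact (Finset.mem_sdiff.1 (Finset.mem_filter.1 hy).1).2
      have hR₀M : ∀ y ∈ R₀, s y ≠ g y := by
        intro y hy
        rw [hR₀] at hy
        exact (Finset.mem_filter.1 hy).2
      have hwf2 : WellFounded (fun a c : Fin n =>
          Relation.TransGen (fun u v => A u v ∧
            u ∈ {x | Quotient.mk (sccSetoid A) x = Quotient.mk (sccSetoid A) m} ∧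
            v ∈ {x | Quotient.mk (sccSetoid A) x = Quotient.mk (sccSetoid A) m} ∧
            u ∉ Sset ∧ v ∉ Sset) c a) := by
        haveI : IsTrans (Fin n) (fun a c : Fin n =>
            Relation.TransGen (fun u v => A u v ∧
              u ∈ {x | Quotient.mk (sccSetoid A) x = Quotient.mk (sccSetoid A) m} ∧
              v ∈ {x | Quotient.mk (sccSetoid A) x = Quotient.mk (sccSetoid A) m} ∧
              u ∉ Sset ∧ v ∉ Sset) c a) := ⟨fun a c d h1 h2 => h2.trans h1⟩
        haveI : IsIrrefl (Fin n) (fun a c : Fin n =>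
            Relation.TransGen (fun u v => A u v ∧
              u ∈ {x | Quotient.mk (sccSetoid A) x = Quotient.mk (sccSetoid A) m} ∧
              v ∈ {x | Quotient.mk (sccSetoid A) x = Quotient.mk (sccSetoid A) m} ∧
              u ∉ Sset ∧ v ∉ Sset) c a) := ⟨fun a h => hSfvs a h⟩
        exact Finite.wellFounded_of_trans_of_irrefl _
      have p2 : ∀ (N2 : ℕ) (R : Finset (Fin n)), R ⊆ R₀ →
          (∀ i, i ∈ C → i ∉ S → i ∉ R → ∀ j ∈ R, ¬ A i j) → R.card ≤ N2 →
          ∃ plan : List (Fin n → ℂ),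
            IsPlan (fun i => if i ∈ S then b i else if i ∈ (T \ C) ∪ R then s i else g i)
              (fun i => if i ∈ S then b i else if i ∈ T \ C then s i else g i) plan ∧
            plan.length = R.card ∧ ∀ cf ∈ plan, ∀ i, cf i ∈ Pos := by
        intro N2
        induction N2 with
        | zero =>
          intro R hRR₀ hInv2 hc
          have hRe : R = ∅ := Finset.card_eq_zero.1 (Nat.le_zero.1 hc)
          subst hRe
          have heq : (fun i => if i ∈ S then b i
                else if i ∈ (T \ C) ∪ (∅ : Finset (Fin n)) then s i else g i)
              = (fun i => if i ∈ S then b i else if i ∈ T \ C then s i else g i) := by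
            funext i; rw [Finset.union_empty]
          rw [heq]
          exact ⟨[], Stmt17.isPlan_nil _, by simp, by simp⟩
        | succ N2 ih2 =>
          intro R hRR₀ hInv2 hc
          rcases R.eq_empty_or_nonempty with hRe | hRne
          · exact ih2 R hRR₀ hInv2 (by simp [hRe])
          obtain ⟨x, hxR', hmin2⟩ := hwf2.has_min ↑R (Finset.coe_nonempty.2 hRne)
          have hxR : x ∈ R := Finset.mem_coe.1 hxR'
          have hxC : x ∈ C := hR₀C x (hRR₀ hxR)
          have hxS : x ∉ S := hR₀S x (hRR₀ hxR)
          have hxM : s x ≠ g x := hR₀M x (hRR₀ hxR)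
          have hxTC : x ∉ T \ C := fun h => (Finset.mem_sdiff.1 h).2 hxC
          have hnoarcx : ∀ j ∈ R, ¬ A x j := by
            intro j hj hAxj
            refine hmin2 j (Finset.mem_coe.2 hj) (Relation.TransGen.single ?_)
            have hjC : j ∈ C := hR₀C j (hRR₀ hj)
            have hjS : j ∉ S := hR₀S j (hRR₀ hj)
            exact ⟨hAxj, (hmemC x).1 hxC, (hmemC j).1 hjC,
              fun h2 => hxS ((hSmem x).2 h2), fun h2 => hjS ((hSmem j).2 h2)⟩
          have hInv2' : ∀ i, i ∈ C → i ∉ S → i ∉ R.erase x → ∀ j ∈ R.erase x, ¬ A i j := by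
            intro i hiC hiS hiR j hj
            by_cases hix : i = x
            · subst hix; exact hnoarcx j (Finset.mem_of_mem_erase hj)
            · exact hInv2 i hiC hiS (fun hiR' => hiR (Finset.mem_erase.2 ⟨hix, hiR'⟩))
                j (Finset.mem_of_mem_erase hj)
          have hXmem : ∀ j, j ∈ (T \ C) ∪ R.erase x → j ∈ T := by
            intro j hj
            rcases Finset.mem_union.1 hj with h1 | h1
            · exact (Finset.mem_sdiff.1 h1).1
            · exact hCT j (hR₀C j (hRR₀ (Finset.mem_of_mem_erase h1)))
          have hpp : PickPlace
              (fun i => if i ∈ S then b i else if i ∈ (T \ C) ∪ R then s i else g i)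
              (fun i => if i ∈ S then b i
                else if i ∈ (T \ C) ∪ R.erase x then s i else g i) := by
            refine ⟨x, ?_, ?_⟩
            · have h1 : x ∉ (T \ C) ∪ R.erase x := by
                intro h2
                rcases Finset.mem_union.1 h2 with h3 | h3
                · exact hxTC h3
                · exact (Finset.mem_erase.1 h3).1 rfl
              have h2 : x ∈ (T \ C) ∪ R := Finset.mem_union_right _ hxR
              simp only [if_neg hxS, if_neg h1, if_pos h2]
              exact Ne.symm hxM
            · intro j hj
              have hiff : (j ∈ (T \ C) ∪ R.erase x) ↔ (j ∈ (T \ C) ∪ R) := by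
                simp only [Finset.mem_union, Finset.mem_erase]
                tauto
              simp only [if_congr (Iff.rfl) rfl rfl, if_congr hiff rfl rfl]
          have hfeas : FeasibleConfig (fun i => if i ∈ S then b i
              else if i ∈ (T \ C) ∪ R.erase x then s i else g i) := by
            apply master S ((T \ C) ∪ R.erase x) b hbs2 hbg2 hbb2
            intro i j hiB hiX hjX hjB hij hAij
            by_cases hiT : i ∈ T
            · have hiC : i ∈ C := by
                by_contra hiC
                exact hiX (Finset.mem_union_left _ (Finset.mem_sdiff.2 ⟨hiT, hiC⟩))
              rcases Finset.mem_union.1 hjX with hj1 | hj2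
              · exact hsink i hiC j (Finset.mem_sdiff.1 hj1).1 (Finset.mem_sdiff.1 hj1).2 hAij
              · exact hInv2' i hiC hiB (fun h => hiX (Finset.mem_union_right _ h)) j hj2 hAij
            · exact hInv i j hiT (hXmem j hjX) hAij
          have hpos2 : ∀ i, (fun i => if i ∈ S then b i
              else if i ∈ (T \ C) ∪ R.erase x then s i else g i) i ∈ Pos := by
            intro i
            by_cases h1 : i ∈ S
            · simp only [if_pos h1]; exact hbPos i h1
            · simp only [if_neg h1]; exact hposPlain _ i
          obtain ⟨plan', hq1, hq2, hq3⟩ := ih2 (R.erase x)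
            ((Finset.erase_subset _ _).trans hRR₀) hInv2'
            (by rw [Finset.card_erase_of_mem hxR]
                have := Finset.card_pos.2 hRne
                omega)
          refine ⟨_ :: plan', Stmt17.isPlan_trans (Stmt17.isPlan_single hpp hfeas) hq1,
            ?_, ?_⟩
          · simp only [List.length_cons, hq2, Finset.card_erase_of_mem hxR]
            have := Finset.card_pos.2 hRne
            omega
          · intro cf hcf i
            rcases List.mem_cons.1 hcf with rfl | h
            · exact hpos2 i
            · exact hq3 cf h i
      -- ### phase 3 : move the FVS from the buffers to the goals
      have p3 : ∀ (N3 : ℕ) (U : Finset (Fin n)), U ⊆ S → U.card ≤ N3 →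
          ∃ plan : List (Fin n → ℂ),
            IsPlan (fun i => if i ∈ U then b i else if i ∈ T \ C then s i else g i)
              (fun i => if i ∈ T \ C then s i else g i) plan ∧
            plan.length = U.card ∧ ∀ cf ∈ plan, ∀ i, cf i ∈ Pos := by
        intro N3
        induction N3 with
        | zero =>
          intro U hUS hc
          have hUe : U = ∅ := Finset.card_eq_zero.1 (Nat.le_zero.1 hc)
          subst hUe
          have heq : (fun i => if i ∈ (∅ : Finset (Fin n)) then b i
                else if i ∈ T \ C then s i else g i)
              = (fun i => if i ∈ T \ C then s i else g i) := by
            funext i; simp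
          rw [heq]
          exact ⟨[], Stmt17.isPlan_nil _, by simp, by simp⟩
        | succ N3 ih3 =>
          intro U hUS hc
          rcases U.eq_empty_or_nonempty with hUe | ⟨x, hxU⟩
          · exact ih3 U hUS (by simp [hUe])
          have hxS : x ∈ S := hUS hxU
          have hxC : x ∈ C := hSC x hxS
          have hxTC : x ∉ T \ C := fun h => (Finset.mem_sdiff.1 h).2 hxC
          have hpp : PickPlace
              (fun i => if i ∈ U then b i else if i ∈ T \ C then s i else g i)
              (fun i => if i ∈ U.erase x then b i else if i ∈ T \ C then s i else g i) := by
            refine ⟨x, ?_, ?_⟩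
            · have h1 : x ∉ U.erase x := fun h => (Finset.mem_erase.1 h).1 rfl
              simp only [if_neg h1, if_neg hxTC, if_pos hxU]
              exact Ne.symm (hne_of _ _ (hbg2 x hxS x))
            · intro j hj
              have hiff : (j ∈ U.erase x) ↔ (j ∈ U) := by
                simp only [Finset.mem_erase]; tauto
              simp only [if_congr hiff rfl rfl]
          have hfeas : FeasibleConfig (fun i => if i ∈ U.erase x then b i
              else if i ∈ T \ C then s i else g i) := by
            apply master (U.erase x) (T \ C) b
            · exact fun i hi j => hbs2 i (hUS (Finset.mem_of_mem_erase hi)) j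
            · exact fun i hi j => hbg2 i (hUS (Finset.mem_of_mem_erase hi)) j
            · exact fun i hi j hj hij =>
                hbb2 i (hUS (Finset.mem_of_mem_erase hi)) j (hUS (Finset.mem_of_mem_erase hj)) hij
            · intro i j hiB hiX hjX hjB hij hAij
              have hjT : j ∈ T := (Finset.mem_sdiff.1 hjX).1
              have hjC : j ∉ C := (Finset.mem_sdiff.1 hjX).2
              by_cases hiT : i ∈ T
              · have hiC : i ∈ C := by
                  by_contra h
                  exact hiX (Finset.mem_sdiff.2 ⟨hiT, h⟩)
                exact hsink i hiC j hjT hjC hAij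
              · exact hInv i j hiT hjT hAij
          have hpos2 : ∀ i, (fun i => if i ∈ U.erase x then b i
              else if i ∈ T \ C then s i else g i) i ∈ Pos := by
            intro i
            by_cases h1 : i ∈ U.erase x
            · simp only [if_pos h1]; exact hbPos i (hUS (Finset.mem_of_mem_erase h1))
            · simp only [if_neg h1]; exact hposPlain _ i
          obtain ⟨plan', hq1, hq2, hq3⟩ := ih3 (U.erase x)
            ((Finset.erase_subset _ _).trans hUS)
            (by rw [Finset.card_erase_of_mem hxU]
                have := Finset.card_pos.2 ⟨x, hxU⟩
                omega)
          refine ⟨_ :: plan', Stmt17.isPlan_trans (Stmt17.isPlan_single hpp hfeas) hq1,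
            ?_, ?_⟩
          · simp only [List.length_cons, hq2, Finset.card_erase_of_mem hxU]
            have := Finset.card_pos.2 ⟨x, hxU⟩
            omega
          · intro cf hcf i
            rcases List.mem_cons.1 hcf with rfl | h
            · exact hpos2 i
            · exact hq3 cf h i
      -- ### assemble the phases and recurse
      have hCsub : C ⊆ T := fun y hy => hCT y hy
      have hInvrec : ∀ i j : Fin n, i ∉ T \ C → j ∈ T \ C → ¬ A i j := by
        intro i j hi hj hAij
        have hjT : j ∈ T := (Finset.mem_sdiff.1 hj).1
        have hjC : j ∉ C := (Finset.mem_sdiff.1 hj).2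
        by_cases hiT : i ∈ T
        · have hiC : i ∈ C := by
            by_contra h
            exact hi (Finset.mem_sdiff.2 ⟨hiT, h⟩)
          exact hsink i hiC j hjT hjC hAij
        · exact hInv i j hiT hjT hAij
      have hcardrec : (T \ C).card ≤ N := by
        rw [Finset.card_sdiff_of_subset hCsub]
        have hCpos : 0 < C.card := Finset.card_pos.2 ⟨m, hmC⟩
        have hTle : T.card ≤ N + 1 := hcard
        have hCle : C.card ≤ T.card := Finset.card_le_card hCsub
        omega
      obtain ⟨plan4, h41, h42, h43⟩ := ih (T \ C) hcardrec hInvrec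
      have hInv20 : ∀ i, i ∈ C → i ∉ S → i ∉ R₀ → ∀ j ∈ R₀, ¬ A i j := by
        intro i hiC hiS hiR j hj hAij
        have hieq : s i = g i := by
          by_contra hne2
          exact hiR (by rw [hR₀]
                        exact Finset.mem_filter.2 ⟨Finset.mem_sdiff.2 ⟨hiC, hiS⟩, hne2⟩)
        exact hAself i hieq j hAij
      obtain ⟨plan1, h11, h12, h13⟩ := p1 (S \ ∅).card ∅ (Finset.empty_subset S) le_rfl
      obtain ⟨plan2, h21, h22, h23⟩ := p2 R₀.card R₀ Finset.Subset.rfl hInv20 le_rfl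
      obtain ⟨plan3, h31, h32, h33⟩ := p3 S.card S Finset.Subset.rfl le_rfl
      -- link equalities
      have heq1 : (fun i => if i ∈ T then s i else g i)
          = (fun i => if i ∈ (∅ : Finset (Fin n)) then b i
              else if i ∈ T then s i else g i) := by
        funext i; simp
      have heq2 : (fun i => if i ∈ S then b i else if i ∈ T then s i else g i)
          = (fun i => if i ∈ S then b i else if i ∈ (T \ C) ∪ R₀ then s i else g i) := by
        funext i
        by_cases h1 : i ∈ S
        · simp only [if_pos h1]
        · simp only [if_neg h1]
          by_cases h2 : i ∈ T
          · by_cases h3 : i ∈ (T \ C) ∪ R₀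
            · simp only [if_pos h2, if_pos h3]
            · simp only [if_pos h2, if_neg h3]
              have hiC : i ∈ C := by
                by_contra h4
                exact h3 (Finset.mem_union_left _ (Finset.mem_sdiff.2 ⟨h2, h4⟩))
              by_contra hne2
              exact h3 (Finset.mem_union_right _ (by
                rw [hR₀]
                exact Finset.mem_filter.2 ⟨Finset.mem_sdiff.2 ⟨hiC, h1⟩, hne2⟩))
          · have h3 : i ∉ (T \ C) ∪ R₀ := by
              intro h4
              rcases Finset.mem_union.1 h4 with h5 | h5
              · exact h2 (Finset.mem_sdiff.1 h5).1
              · exact h2 (hCT i (hR₀C i h5))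
            simp only [if_neg h2, if_neg h3]
      rw [← heq2] at h21
      -- counting
      have hcount1 : (T.filter fun i => s i ≠ g i).card
          = (C.filter fun i => s i ≠ g i).card
            + ((T \ C).filter fun i => s i ≠ g i).card := by
        rw [← Finset.card_union_of_disjoint
            (Finset.disjoint_filter_filter Finset.disjoint_sdiff),
          ← Finset.filter_union, Finset.union_sdiff_of_subset hCsub]
      have hcount2 : (C.filter fun i => s i ≠ g i).card = S.card + R₀.card := by
        have hCfil : C.filter (fun i => s i ≠ g i) = S ∪ R₀ := by
          ext y
          rw [hR₀]
          simp only [Finset.mem_filter, Finset.mem_union, Finset.mem_sdiff]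
          constructor
          · rintro ⟨hyC, hyM⟩
            by_cases hyS : y ∈ S
            · exact Or.inl hyS
            · exact Or.inr ⟨⟨hyC, hyS⟩, hyM⟩
          · rintro (hyS | ⟨⟨hyC, _⟩, hyM⟩)
            · exact ⟨hSC y hyS, hSMf y hyS⟩
            · exact ⟨hyC, hyM⟩
        rw [hCfil, Finset.card_union_of_disjoint]
        refine Finset.disjoint_left.2 fun y hyS hyR => hR₀S y hyR hyS
      have hcount3 : (∑ c : Quotient (sccSetoid A),
            (if ∀ x : Fin n, Quotient.mk (sccSetoid A) x = c → x ∈ T then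
              Stmt17.nuRel A {x | Quotient.mk (sccSetoid A) x = c} else 0))
          = S.card + (∑ c : Quotient (sccSetoid A),
            (if ∀ x : Fin n, Quotient.mk (sccSetoid A) x = c → x ∈ T \ C then
              Stmt17.nuRel A {x | Quotient.mk (sccSetoid A) x = c} else 0)) := by
        rw [← Finset.add_sum_erase Finset.univ _
            (Finset.mem_univ (Quotient.mk (sccSetoid A) m)),
          ← Finset.add_sum_erase Finset.univ
            (fun c => (if ∀ x : Fin n, Quotient.mk (sccSetoid A) x = c → x ∈ T \ C then
              Stmt17.nuRel A {x | Quotient.mk (sccSetoid A) x = c} else 0))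
            (Finset.mem_univ (Quotient.mk (sccSetoid A) m))]
        have hterm1 : (if ∀ x : Fin n, Quotient.mk (sccSetoid A) x
              = Quotient.mk (sccSetoid A) m → x ∈ T then
            Stmt17.nuRel A {x | Quotient.mk (sccSetoid A) x = Quotient.mk (sccSetoid A) m}
            else 0) = S.card := by
          rw [if_pos fun x hx => hCT x ((hmemC x).2 hx), hScard']
        have hterm2 : (if ∀ x : Fin n, Quotient.mk (sccSetoid A) x
              = Quotient.mk (sccSetoid A) m → x ∈ T \ C then
            Stmt17.nuRel A {x | Quotient.mk (sccSetoid A) x = Quotient.mk (sccSetoid A) m}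
            else 0) = 0 := by
          rw [if_neg]
          intro hcond
          exact (Finset.mem_sdiff.1 (hcond m rfl)).2 hmC
        have hrest : ∀ c ∈ Finset.univ.erase (Quotient.mk (sccSetoid A) m),
            (if ∀ x : Fin n, Quotient.mk (sccSetoid A) x = c → x ∈ T then
              Stmt17.nuRel A {x | Quotient.mk (sccSetoid A) x = c} else 0)
            = (if ∀ x : Fin n, Quotient.mk (sccSetoid A) x = c → x ∈ T \ C then
              Stmt17.nuRel A {x | Quotient.mk (sccSetoid A) x = c} else 0) := by
          intro c hc
          have hcm : c ≠ Quotient.mk (sccSetoid A) m := (Finset.mem_erase.1 hc).1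
          refine if_congr ⟨fun h x hx => ?_, fun h x hx => (Finset.mem_sdiff.1 (h x hx)).1⟩
            rfl rfl
          refine Finset.mem_sdiff.2 ⟨h x hx, fun hxC => ?_⟩
          exact hcm (hx ▸ (hmemC x).1 hxC)
        rw [hterm1, hterm2, Finset.sum_congr rfl hrest]
        omega
      refine ⟨plan1 ++ (plan2 ++ (plan3 ++ plan4)), ?_, ?_, ?_⟩
      · rw [heq1]
        exact Stmt17.isPlan_trans h11 (Stmt17.isPlan_trans h21
          (Stmt17.isPlan_trans h31 h41))
      · simp only [List.length_append, h12, h22, h32, h42]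
        rw [Finset.sdiff_empty] at *
        omega
      · intro cf hcf i
        rcases List.mem_append.1 hcf with h | h
        · exact h13 cf h i
        rcases List.mem_append.1 h with h | h
        · exact h23 cf h i
        rcases List.mem_append.1 h with h | h
        · exact h33 cf h i
        · exact h43 cf h i
  obtain ⟨plan, hp1, hp2, hp3⟩ := outer Finset.univ.card Finset.univ le_rfl
    (fun i j hi _ => absurd (Finset.mem_univ i) hi)
  refine ⟨plan, ?_, ?_, ?_⟩
  · have huniv : (fun i => if i ∈ (Finset.univ : Finset (Fin n)) then s i else g i) = s := by
      funext i; simp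
    rwa [huniv] at hp1
  · rw [hp2]
    congr 1
    · rw [Set.ncard_eq_toFinset_card', Set.toFinset_setOf]
    · rw [Stmt17.nuFVS_eq_sum A]
      refine Finset.sum_congr rfl fun c _ => ?_
      exact if_pos fun x _ => Finset.mem_univ x
  · have hsub : {x : ℂ | ∃ c ∈ plan, ∃ i : Fin n, c i = x} \ (Set.range s ∪ Set.range g)
        ⊆ buf '' Set.Iio K := by
      rintro x ⟨⟨cf, hcf, i, rfl⟩, hx2⟩
      have hmem := hp3 cf hcf i
      rw [hPos] at hmem
      rcases hmem with h | h
      · exact absurd h hx2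
      · exact h
    refine (Set.ncard_le_ncard hsub ((Set.finite_Iio K).image buf)).trans ?_
    calc (buf '' Set.Iio K).ncard ≤ (Set.Iio K).ncard :=
          Set.ncard_image_le (Set.finite_Iio K)
      _ = K := by rw [← Finset.coe_Iio, Set.ncard_coe_finset, Nat.card_Iio]
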